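/- Let X₁, X₂ be i.i.d. continuous positive random variables with CDF F and E[X] < ∞. Then ∫_1^∞ E[((α+1)/X)(min(X,t)-1)] dF(t) = (α+1)·E[(X₂/X₁)·1{X₂ < X₁} − 1/X₁] + (α+1)/2, and hence the departure Δ_I = ∫_1^∞ (E[((α+1)/X)(min(X,t)-1)] − F(t)) dF(t) equals (α+1)·E[(X₂/X₁)·1{X₂ < X₁} − 1/X₁] + α/2. -/

import Mathlib

open MeasureTheory Filter

lemma deltaI_noatom (μ : Measure ℝ) [IsProbabilityMeasure μ] (F : ℝ → ℝ)
    (hF : ∀ t, F t = (μ (Set.Iic t)).toReal) (hcont : Continuous F) (a : ℝ) :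
    μ {a} = 0 := by
  have key : ∀ s, s < a → (μ {a}).toReal ≤ F a - F s := by
    intro s hs
    have hsub : Set.Ioc s a = Set.Iic a \ Set.Iic s := by
      ext x; simp [Set.mem_Ioc, Set.mem_Iic, not_le, and_comm]
    have h2 : μ (Set.Ioc s a) = μ (Set.Iic a) - μ (Set.Iic s) := by
      rw [hsub, measure_diff (Set.Iic_subset_Iic.mpr hs.le)
        measurableSet_Iic.nullMeasurableSet (measure_ne_top μ _)]
    have h3 : (μ (Set.Ioc s a)).toReal = F a - F s := by
      rw [h2, ENNReal.toReal_sub_of_le (measure_mono (Set.Iic_subset_Iic.mpr hs.le))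
        (measure_ne_top μ _), hF, hF]
    have h4 : μ {a} ≤ μ (Set.Ioc s a) := by
      apply measure_mono
      intro x hx
      simp only [Set.mem_singleton_iff] at hx
      simp [hx, hs]
    calc (μ {a}).toReal ≤ (μ (Set.Ioc s a)).toReal :=
          ENNReal.toReal_mono (measure_ne_top μ _) h4
      _ = F a - F s := h3
  have hlim : Tendsto (fun s => F a - F s) (nhdsWithin a (Set.Iio a)) (nhds 0) := by
    have h5 : Tendsto F (nhdsWithin a (Set.Iio a)) (nhds (F a)) :=
      (hcont.tendsto a).mono_left nhdsWithin_le_nhds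
    have h6 := (tendsto_const_nhds (x := F a)
      (f := nhdsWithin a (Set.Iio a))).sub h5
    simpa using h6
  have hle : (μ {a}).toReal ≤ 0 := by
    refine ge_of_tendsto hlim ?_
    filter_upwards [self_mem_nhdsWithin] with s hs using key s hs
  have h0 : (μ {a}).toReal = 0 :=
    le_antisymm hle ENNReal.toReal_nonneg
  exact (ENNReal.toReal_eq_zero_iff _).mp h0 |>.resolve_right (measure_ne_top μ _)

lemma deltaI_integral_cdf (μ : Measure ℝ) [IsProbabilityMeasure μ] (F : ℝ → ℝ)
    (hF : ∀ t, F t = (μ (Set.Iic t)).toReal) (hcont : Continuous F) :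
    ∫ t, F t ∂μ = 1 / 2 := by
  set D : Set (ℝ × ℝ) := {p | p.2 ≤ p.1} with hDdef
  have hD : MeasurableSet D := (isClosed_le continuous_snd continuous_fst).measurableSet
  have hD' : MeasurableSet {p : ℝ × ℝ | p.1 ≤ p.2} :=
    (isClosed_le continuous_fst continuous_snd).measurableSet
  have hpre : ∀ t : ℝ, Prod.mk t ⁻¹' D = Set.Iic t := by
    intro t; ext x; simp [hDdef, Set.mem_Iic]
  have hmeas : Measurable fun t => μ (Set.Iic t) := by
    have h := measurable_measure_prodMk_left (ν := μ) hD
    simpa [hpre] using h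
  have h1 : ∫ t, F t ∂μ = ((μ.prod μ) D).toReal := by
    rw [Measure.prod_apply hD]
    rw [show (fun t => F t) = fun t => (μ (Set.Iic t)).toReal from funext hF]
    rw [integral_toReal hmeas.aemeasurable (ae_of_all _ fun t => measure_lt_top μ _)]
    congr 1
  have hswap : (μ.prod μ) {p : ℝ × ℝ | p.1 ≤ p.2} = (μ.prod μ) D := by
    have hstep : (μ.prod μ) {p : ℝ × ℝ | p.1 ≤ p.2}
        = Measure.map Prod.swap (μ.prod μ) {p : ℝ × ℝ | p.1 ≤ p.2} := by
      rw [Measure.prod_swap]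
    rw [hstep, Measure.map_apply measurable_swap hD']
    congr 1
  have hdiag : (μ.prod μ) {p : ℝ × ℝ | p.1 = p.2} = 0 := by
    have hmd : MeasurableSet {p : ℝ × ℝ | p.1 = p.2} :=
      (isClosed_eq continuous_fst continuous_snd).measurableSet
    rw [Measure.prod_apply hmd]
    have hpre2 : ∀ t : ℝ, (Prod.mk t ⁻¹' {p : ℝ × ℝ | p.1 = p.2}) = {t} := by
      intro t; ext x; simp [eq_comm]
    simp only [hpre2, deltaI_noatom μ F hF hcont]
    simp
  have hunion : D ∪ {p : ℝ × ℝ | p.1 ≤ p.2} = Set.univ := by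
    ext p; simpa [hDdef] using le_total p.2 p.1
  have hinter : D ∩ {p : ℝ × ℝ | p.1 ≤ p.2} = {p : ℝ × ℝ | p.1 = p.2} := by
    ext p
    constructor
    · rintro ⟨h1, h2⟩; exact le_antisymm h2 h1
    · intro h; exact ⟨le_of_eq h.symm, le_of_eq h⟩
  have hadd := measure_union_add_inter (μ := μ.prod μ) D hD'
  rw [hunion, hinter, hdiag, measure_univ, add_zero, hswap] at hadd
  have hfin : (μ.prod μ) D ≠ ⊤ := measure_ne_top _ _
  have htr : ((μ.prod μ) D).toReal + ((μ.prod μ) D).toReal = 1 := by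
    rw [← ENNReal.toReal_add hfin hfin, ← hadd]; simp
  rw [h1]; linarith

theorem deltaI_representation (α : ℝ) (hα : 0 < α)
    (μ : Measure ℝ) [IsProbabilityMeasure μ]
    (hsupp : μ (Set.Iio 1) = 0)
    (F : ℝ → ℝ) (hF : ∀ t, F t = (μ (Set.Iic t)).toReal)
    (hcont : Continuous F)
    (hmean : Integrable id μ) :
    (∫ t, (∫ x, ((α + 1) / x) * (min x t - 1) ∂μ) ∂μ
        = (α + 1) * (∫ x₁, ∫ x₂, ((if x₂ < x₁ then x₂ / x₁ else 0) - 1 / x₁) ∂μ ∂μ)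
          + (α + 1) / 2) ∧
    (∫ t, ((∫ x, ((α + 1) / x) * (min x t - 1) ∂μ) - F t) ∂μ
        = (α + 1) * (∫ x₁, ∫ x₂, ((if x₂ < x₁ then x₂ / x₁ else 0) - 1 / x₁) ∂μ ∂μ)
          + α / 2) := by
  classical
  have hx1 : ∀ᵐ x ∂μ, 1 ≤ x := by
    rw [ae_iff]
    simpa [not_le] using (show μ {a | a < 1} = 0 from hsupp)
  have hx1p : ∀ᵐ p ∂(μ.prod μ), 1 ≤ p.1 ∧ 1 ≤ p.2 := by
    have h1 : (μ.prod μ) {p : ℝ × ℝ | p.1 < 1} = 0 := by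
      have he : {p : ℝ × ℝ | p.1 < 1} = Set.Iio 1 ×ˢ Set.univ := by ext p; simp
      rw [he, Measure.prod_prod, hsupp, zero_mul]
    have h2 : (μ.prod μ) {p : ℝ × ℝ | p.2 < 1} = 0 := by
      have he : {p : ℝ × ℝ | p.2 < 1} = Set.univ ×ˢ Set.Iio 1 := by ext p; simp
      rw [he, Measure.prod_prod, hsupp, mul_zero]
    rw [ae_iff]
    refine measure_mono_null (fun p hp => ?_) (measure_union_null h1 h2)
    simp only [Set.mem_setOf_eq, not_and, not_le] at hp
    by_cases hq : p.1 < 1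
    · exact Or.inl hq
    · exact Or.inr (hp (not_lt.mp hq))
  set k : ℝ × ℝ → ℝ := fun p => if p.1 < p.2 then p.1 / p.2 else 0 with hk
  have hkmeas : Measurable k :=
    Measurable.ite (measurableSet_lt measurable_fst measurable_snd)
      (measurable_fst.div measurable_snd) measurable_const
  have hkint : Integrable k (μ.prod μ) := by
    refine Integrable.mono' (integrable_const 1) hkmeas.aestronglyMeasurable ?_
    filter_upwards [hx1p] with p hp
    obtain ⟨h1, h2⟩ := hp
    rw [Real.norm_eq_abs]
    by_cases hlt : p.1 < p.2
    · simp only [hk, hlt, if_true]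
      rw [abs_of_nonneg (div_nonneg (by linarith) (by linarith))]
      exact div_le_one_of_le₀ hlt.le (by linarith)
    · simp [hk, hlt]
  have hwmeas : Measurable fun x : ℝ => 1 / x := measurable_const.div measurable_id
  have hwint : Integrable (fun x : ℝ => 1 / x) μ := by
    refine Integrable.mono' (integrable_const 1) hwmeas.aestronglyMeasurable ?_
    filter_upwards [hx1] with x hx
    rw [Real.norm_eq_abs, abs_of_nonneg (div_nonneg zero_le_one (by linarith))]
    exact (div_le_one (by linarith)).mpr hx
  have hFb : ∀ t, 0 ≤ F t ∧ F t ≤ 1 := by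
    intro t
    constructor
    · rw [hF]; exact ENNReal.toReal_nonneg
    · rw [hF]
      have hle : μ (Set.Iic t) ≤ 1 := prob_le_one
      calc (μ (Set.Iic t)).toReal ≤ (1 : ENNReal).toReal :=
            ENNReal.toReal_mono ENNReal.one_ne_top hle
        _ = 1 := by simp
  have hFint : Integrable F μ := by
    refine Integrable.mono' (integrable_const 1) hcont.aestronglyMeasurable
      (ae_of_all _ fun t => ?_)
    rw [Real.norm_eq_abs, abs_of_nonneg (hFb t).1]
    exact (hFb t).2
  set K : ℝ → ℝ := fun t => ∫ x, k (t, x) ∂μ with hK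
  have hKint : Integrable K μ := hkint.integral_prod_left
  set c : ℝ := ∫ x, 1 / x ∂μ with hc
  have hind : ∀ t : ℝ, ∫ x, (if x ≤ t then (1:ℝ) else 0) ∂μ = F t := by
    intro t
    have he : (fun x => if x ≤ t then (1:ℝ) else 0)
        = (Set.Iic t).indicator (fun _ => (1:ℝ)) := by
      ext x; simp [Set.indicator_apply, Set.mem_Iic]
    rw [he, integral_indicator_const _ measurableSet_Iic, hF]; simp; rfl
  have hindint : ∀ t : ℝ, Integrable (fun x => if x ≤ t then (1:ℝ) else 0) μ := by
    intro t
    have he : (fun x => if x ≤ t then (1:ℝ) else 0)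
        = (Set.Iic t).indicator (fun _ => (1:ℝ)) := by
      ext x; simp [Set.indicator_apply, Set.mem_Iic]
    rw [he]
    exact (integrable_const (1:ℝ)).indicator measurableSet_Iic
  have hkt_int : ∀ t : ℝ, Integrable (fun x => k (t, x)) μ := by
    intro t
    refine Integrable.mono' (integrable_const (|t|))
      (hkmeas.comp (measurable_prodMk_left)).aestronglyMeasurable ?_
    filter_upwards [hx1] with x hx
    rw [Real.norm_eq_abs]
    by_cases hlt : t < x
    · simp only [hk, hlt, if_true]
      rw [abs_div, abs_of_nonneg (by linarith : (0:ℝ) ≤ x)]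
      exact div_le_self (abs_nonneg t) hx
    · simp [hk, hlt]
  have hkx_int : ∀ y : ℝ, Integrable (fun x => k (x, y)) μ := by
    intro y
    refine Integrable.mono' (integrable_const 1)
      (hkmeas.comp (measurable_prodMk_right)).aestronglyMeasurable ?_
    filter_upwards [hx1] with x hx
    rw [Real.norm_eq_abs]
    by_cases hlt : x < y
    · simp only [hk, hlt, if_true]
      rw [abs_of_nonneg (div_nonneg (by linarith) (by linarith))]
      exact div_le_one_of_le₀ hlt.le (by linarith)
    · simp [hk, hlt]
  have hinner : ∀ t : ℝ, ∫ x, ((α + 1) / x) * (min x t - 1) ∂μ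
      = (α + 1) * (F t + K t - c) := by
    intro t
    have heq : ∀ᵐ x ∂μ, ((α + 1) / x) * (min x t - 1)
        = (α + 1) * ((if x ≤ t then (1:ℝ) else 0) + k (t, x) - 1 / x) := by
      filter_upwards [hx1] with x hx
      have hx0 : x ≠ 0 := ne_of_gt (by linarith)
      by_cases hxt : x ≤ t
      · have hnlt : ¬ t < x := not_lt.mpr hxt
        rw [min_eq_left hxt]
        simp only [hk, hxt, if_true, hnlt, if_false]
        field_simp
        ring
      · have hlt : t < x := not_le.mp hxt
        rw [min_eq_right hlt.le]
        simp only [hk, hxt, if_false, hlt, if_true]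
        field_simp
        ring
    have h12 : Integrable (fun x => (if x ≤ t then (1:ℝ) else 0) + k (t, x)) μ :=
      (hindint t).add (hkt_int t)
    rw [integral_congr_ae heq, integral_const_mul]
    congr 1
    rw [integral_sub h12 hwint, integral_add (hindint t) (hkt_int t), hind t]
  have ICF : ∫ t, F t ∂μ = 1 / 2 := deltaI_integral_cdf μ F hF hcont
  have houter : ∫ t, (∫ x, ((α + 1) / x) * (min x t - 1) ∂μ) ∂μ
      = (α + 1) * (1 / 2 + (∫ t, K t ∂μ) - c) := by
    have hFK : Integrable (fun t => F t + K t) μ := hFint.add hKint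
    rw [integral_congr_ae (Eventually.of_forall hinner), integral_const_mul,
      integral_sub hFK (integrable_const c),
      integral_add hFint hKint, ICF, integral_const]
    simp
  have hSswap : ∫ t, K t ∂μ = ∫ x₁, ∫ x₂, k (x₂, x₁) ∂μ ∂μ := by
    exact integral_integral_swap (f := fun a b => k (a, b)) hkint
  have hRHS : ∫ x₁, ∫ x₂, ((if x₂ < x₁ then x₂ / x₁ else 0) - 1 / x₁) ∂μ ∂μ
      = (∫ x₁, ∫ x₂, k (x₂, x₁) ∂μ ∂μ) - c := by
    have hin : ∀ x₁ : ℝ, ∫ x₂, ((if x₂ < x₁ then x₂ / x₁ else 0) - 1 / x₁) ∂μ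
        = (∫ x₂, k (x₂, x₁) ∂μ) - 1 / x₁ := by
      intro x₁
      rw [show (fun x₂ => (if x₂ < x₁ then x₂ / x₁ else 0) - 1 / x₁)
          = fun x₂ => k (x₂, x₁) - 1 / x₁ from rfl]
      rw [integral_sub (hkx_int x₁) (integrable_const _), integral_const]
      simp
    rw [integral_congr_ae (Eventually.of_forall hin),
      integral_sub hkint.integral_prod_right hwint]
  have part1 : ∫ t, (∫ x, ((α + 1) / x) * (min x t - 1) ∂μ) ∂μ
      = (α + 1) * (∫ x₁, ∫ x₂, ((if x₂ < x₁ then x₂ / x₁ else 0) - 1 / x₁) ∂μ ∂μ)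
        + (α + 1) / 2 := by
    rw [houter, hSswap, hRHS]
    ring
  refine ⟨part1, ?_⟩
  have hinteg_inner : Integrable (fun t => ∫ x, ((α + 1) / x) * (min x t - 1) ∂μ) μ := by
    rw [show (fun t => ∫ x, ((α + 1) / x) * (min x t - 1) ∂μ)
        = fun t => (α + 1) * (F t + K t - c) from funext hinner]
    exact (((hFint.add hKint).sub (integrable_const c)).const_mul _)
  rw [integral_sub hinteg_inner hFint, part1, ICF]
  ring
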